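/- For every operator system S ⊆ M_n, the chain of inequalities α(S) ≤ β(S) ≤ γ(S) ≤ cc(S) holds (the last inequality is interpreted in ℕ ∪ {∞}). -/

import Mathlib

open Matrix
open scoped ComplexOrder

/-- A tuple of Kraus operators for a quantum channel `M_ι → M_k`:
`r` matrices of size `k × ι` with `∑ Aᵢᴴ Aᵢ = I`. -/
noncomputable def IsKraus {ι : Type*} [Fintype ι] [DecidableEq ι] {k r : ℕ}
    (A : Fin r → Matrix (Fin k) ι ℂ) : Prop :=
  ∑ i, (A i)ᴴ * A i = 1

/-- The non-commutative confusability graph `S_Φ = span{Aᵢᴴ Aⱼ}` of a channel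
given by Kraus operators. -/
noncomputable def confGraph {ι : Type*} [Fintype ι] {k r : ℕ}
    (A : Fin r → Matrix (Fin k) ι ℂ) : Submodule ℂ (Matrix ι ι ℂ) :=
  Submodule.span ℂ {B | ∃ i j, B = (A i)ᴴ * A j}

/-- An operator system in `M_ι`: a subspace containing `I` and closed under `ᴴ`. -/
def IsOperatorSystem {ι : Type*} [Fintype ι] [DecidableEq ι]
    (S : Submodule ℂ (Matrix ι ι ℂ)) : Prop :=
  (1 : Matrix ι ι ℂ) ∈ S ∧ ∀ A ∈ S, Aᴴ ∈ S

/-- Quantum complexity `γ(S)`: the least `k` such that `S = S_Φ` for some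
quantum channel `Φ : M_ι → M_k`. -/
noncomputable def gammaOS {ι : Type*} [Fintype ι] [DecidableEq ι]
    (S : Submodule ℂ (Matrix ι ι ℂ)) : ℕ :=
  sInf {k | ∃ r : ℕ, ∃ A : Fin r → Matrix (Fin k) ι ℂ, IsKraus A ∧ confGraph A = S}

/-- Quantum subcomplexity `β(S)`: the least `k` such that `S_Φ ⊆ S` for some
quantum channel `Φ : M_ι → M_k`. -/
noncomputable def betaOS {ι : Type*} [Fintype ι] [DecidableEq ι]
    (S : Submodule ℂ (Matrix ι ι ℂ)) : ℕ :=
  sInf {k | ∃ r : ℕ, ∃ A : Fin r → Matrix (Fin k) ι ℂ, IsKraus A ∧ confGraph A ≤ S}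

/-- Independence number `α(S)`: the largest `m` admitting an `S`-independent family
of `m` nonzero vectors, i.e. with `tr(Bᴴ xₚ xₖᴴ) = 0` for `B ∈ S`, `p ≠ q`. -/
noncomputable def alphaOS {ι : Type*} [Fintype ι] [DecidableEq ι]
    (S : Submodule ℂ (Matrix ι ι ℂ)) : ℕ :=
  sSup {m | ∃ x : Fin m → ι → ℂ, (∀ p, x p ≠ 0) ∧
    ∀ p q, p ≠ q → ∀ B ∈ S, Matrix.trace (Bᴴ * Matrix.vecMulVec (x p) (star (x q))) = 0}

/-- A non-cancelling tuple of Kraus operators: each of them of the form `A · D` with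
`A` entrywise nonnegative (real entries) and `D` an invertible diagonal matrix. -/
noncomputable def IsNonCancelling {ι : Type*} [Fintype ι] [DecidableEq ι] {k r : ℕ}
    (A : Fin r → Matrix (Fin k) ι ℂ) : Prop :=
  ∀ i, ∃ (B : Matrix (Fin k) ι ℝ) (d : ι → ℂ),
    (∀ a b, 0 ≤ B a b) ∧ (∀ j, d j ≠ 0) ∧
    A i = (B.map ((↑) : ℝ → ℂ)) * Matrix.diagonal d

/-- `cc(S) ∈ ℕ ∪ {∞}`: the infimum of the `k` for which some non-cancelling quantum channel
`Φ : M_ι → M_k` has `S_Φ = S`. -/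
noncomputable def ccOS {ι : Type*} [Fintype ι] [DecidableEq ι]
    (S : Submodule ℂ (Matrix ι ι ℂ)) : ℕ∞ :=
  sInf {c : ℕ∞ | ∃ k : ℕ, c = k ∧ ∃ r : ℕ, ∃ A : Fin r → Matrix (Fin k) ι ℂ,
    IsKraus A ∧ IsNonCancelling A ∧ confGraph A = S}

lemma psd_perturb {n : ℕ} (H : Matrix (Fin n) (Fin n) ℂ) (hH : H.IsHermitian) :
    ∃ t : ℝ, 0 < t ∧ ((1 : Matrix (Fin n) (Fin n) ℂ) + (t : ℂ) • H).PosSemidef ∧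
      ((1 : Matrix (Fin n) (Fin n) ℂ) - (t : ℂ) • H).PosSemidef := by
  set C : ℝ := ∑ i, ∑ j, ‖H i j‖ with hC
  have hC0 : 0 ≤ C := Finset.sum_nonneg fun i _ => Finset.sum_nonneg fun j _ => (norm_nonneg _)
  have claim : ∀ ε : ℝ, |ε| * C ≤ 1 → ((1 : Matrix (Fin n) (Fin n) ℂ) + (ε : ℂ) • H).PosSemidef := by
    intro ε hε
    refine Matrix.PosSemidef.of_dotProduct_mulVec_nonneg ?_ ?_
    · have hsm : ((ε : ℂ) • H).IsHermitian := by
        unfold Matrix.IsHermitian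
        rw [conjTranspose_smul, hH.eq, Complex.star_def, Complex.conj_ofReal]
      exact isHermitian_one.add hsm
    · intro x
      set s : ℝ := ∑ i, Complex.normSq (x i) with hs
      have hs0 : 0 ≤ s := Finset.sum_nonneg fun i _ => Complex.normSq_nonneg _
      have ha : star x ⬝ᵥ ((1 : Matrix (Fin n) (Fin n) ℂ) *ᵥ x) = (s : ℂ) := by
        simp [Matrix.one_mulVec, dotProduct, hs, ← Complex.normSq_eq_conj_mul_self]
      set b : ℂ := star x ⬝ᵥ (H *ᵥ x) with hb
      have hbim : b.im = 0 := by
        have : (starRingEnd ℂ) b = b := by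
          have h1 : star b = star (H *ᵥ x) ⬝ᵥ x := by
            rw [hb, star_dotProduct]; simp
          rw [show ((starRingEnd ℂ) b) = star b from rfl, h1, star_mulVec, hH.eq,
            ← Matrix.dotProduct_mulVec]
        exact Complex.conj_eq_iff_im.mp this
      have hxs : ∀ i, ‖x i‖ ^ 2 ≤ s := by
        intro i
        rw [Complex.sq_norm]
        exact Finset.single_le_sum (f := fun i => Complex.normSq (x i))
          (fun j _ => Complex.normSq_nonneg _) (Finset.mem_univ i)
      have habs : ‖b‖ ≤ C * s := by
        have h1 : ‖b‖ ≤ ∑ i, ∑ j, ‖x i‖ * ‖H i j‖ * ‖x j‖ := by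
          refine (norm_sum_le _ _).trans ?_
          refine Finset.sum_le_sum fun i _ => ?_
          simp only [Matrix.mulVec, dotProduct, Pi.star_apply]
          rw [Finset.mul_sum]
          refine (norm_sum_le _ _).trans ?_
          refine Finset.sum_le_sum fun j _ => ?_
          refine le_of_eq ?_
          rw [norm_mul, norm_mul]
          rw [show star (x i) = (starRingEnd ℂ) (x i) from rfl, Complex.norm_conj]
          ring
        refine h1.trans ?_
        rw [hC, Finset.sum_mul]
        refine Finset.sum_le_sum fun i _ => ?_
        rw [Finset.sum_mul]
        refine Finset.sum_le_sum fun j _ => ?_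
        have := hxs i; have := hxs j
        nlinarith [norm_nonneg (H i j), norm_nonneg (x i), norm_nonneg (x j),
          sq_nonneg (‖x i‖ - ‖x j‖)]
      have hbre : |b.re| ≤ C * s := (Complex.abs_re_le_norm b).trans habs
      have key : star x ⬝ᵥ (((1 : Matrix (Fin n) (Fin n) ℂ) + (ε : ℂ) • H) *ᵥ x)
          = (s : ℂ) + (ε : ℂ) * b := by
        rw [Matrix.add_mulVec, Matrix.smul_mulVec, dotProduct_add, ha,
          dotProduct_smul, hb, smul_eq_mul]
      rw [key, Complex.nonneg_iff]
      constructor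
      · simp only [Complex.add_re, Complex.ofReal_re, Complex.mul_re, Complex.ofReal_im, hbim,
          mul_zero, zero_mul, sub_zero]
        have h2 : |ε * b.re| ≤ s := by
          rw [abs_mul]
          calc |ε| * |b.re| ≤ |ε| * (C * s) := by
                exact mul_le_mul_of_nonneg_left hbre (abs_nonneg ε)
            _ = (|ε| * C) * s := by ring
            _ ≤ 1 * s := mul_le_mul_of_nonneg_right hε hs0
            _ = s := one_mul s
        rw [abs_le] at h2
        linarith [h2.1]
      · simp [Complex.add_im, Complex.mul_im, hbim]
  have ht1 : |(C+1)⁻¹| * C ≤ 1 := by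
    rw [abs_of_pos (by positivity)]
    rw [inv_mul_le_iff₀ (by positivity)]
    linarith
  have ht2 : |-(C+1)⁻¹| * C ≤ 1 := by rwa [abs_neg]
  refine ⟨(C + 1)⁻¹, by positivity, claim _ ht1, ?_⟩
  have hsc : ((-(C+1)⁻¹ : ℝ) : ℂ) = -((((C+1)⁻¹ : ℝ)) : ℂ) := by push_cast; ring
  have h : (1 : Matrix (Fin n) (Fin n) ℂ) + ((-(C+1)⁻¹ : ℝ) : ℂ) • H
      = 1 - (((C+1)⁻¹ : ℝ) : ℂ) • H := by
    rw [hsc, neg_smul, ← sub_eq_add_neg]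
  rw [← h]
  exact claim _ ht2

lemma sum_mulVec' {ι : Type*} [Fintype ι] {a b : ℕ} (M : ι → Matrix (Fin a) (Fin b) ℂ)
    (v : Fin b → ℂ) : (∑ i, M i) *ᵥ v = ∑ i, M i *ᵥ v := by
  ext j
  simp only [Matrix.mulVec, dotProduct, Matrix.sum_apply, Finset.sum_apply, Finset.sum_mul]
  exact Finset.sum_comm

lemma dotProduct_sum' {ι : Type*} [Fintype ι] {a : ℕ} (v : Fin a → ℂ) (w : ι → Fin a → ℂ) :
    v ⬝ᵥ (∑ i, w i) = ∑ i, v ⬝ᵥ w i := by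
  simp only [dotProduct, Finset.sum_apply, Finset.mul_sum]
  exact Finset.sum_comm

lemma trace_vecMulVec {n : ℕ} (M : Matrix (Fin n) (Fin n) ℂ) (u v : Fin n → ℂ) :
    Matrix.trace (M * Matrix.vecMulVec u (star v)) = star v ⬝ᵥ (M *ᵥ u) := by
  simp only [Matrix.trace, Matrix.diag, Matrix.mul_apply, Matrix.vecMulVec_apply,
    dotProduct, Matrix.mulVec, Pi.star_apply]
  refine Finset.sum_congr rfl fun c _ => ?_
  rw [Finset.mul_sum]
  refine Finset.sum_congr rfl fun b _ => ?_
  ring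

lemma alpha_bound {n k r m : ℕ} (S : Submodule ℂ (Matrix (Fin n) (Fin n) ℂ))
    (A : Fin r → Matrix (Fin k) (Fin n) ℂ) (hK : IsKraus A) (hle : confGraph A ≤ S)
    (x : Fin m → (Fin n) → ℂ) (hx0 : ∀ p, x p ≠ 0)
    (hortho : ∀ p q, p ≠ q → ∀ B ∈ S,
      Matrix.trace (Bᴴ * Matrix.vecMulVec (x p) (star (x q))) = 0) : m ≤ k := by
  have hex : ∀ p, ∃ i, A i *ᵥ x p ≠ 0 := by
    intro p
    by_contra h
    push_neg at h
    apply hx0 p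
    have h1 : (1 : Matrix (Fin n) (Fin n) ℂ) *ᵥ x p = 0 := by
      rw [← hK, sum_mulVec']
      refine Finset.sum_eq_zero fun i _ => ?_
      rw [← Matrix.mulVec_mulVec, h i, Matrix.mulVec_zero]
    rwa [Matrix.one_mulVec] at h1
  choose f hf using hex
  set y : Fin m → (Fin k) → ℂ := fun p => A (f p) *ᵥ x p with hy
  have horth : ∀ p q, p ≠ q → star (y q) ⬝ᵥ y p = 0 := by
    intro p q hpq
    have hB : ((A (f p))ᴴ * A (f q)) ∈ S :=
      hle (Submodule.subset_span ⟨f p, f q, rfl⟩)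
    have := hortho p q hpq _ hB
    rw [Matrix.conjTranspose_mul, Matrix.conjTranspose_conjTranspose] at this
    rw [trace_vecMulVec] at this
    rw [Matrix.dotProduct_mulVec] at this
    show star (A (f q) *ᵥ x q) ⬝ᵥ (A (f p) *ᵥ x p) = 0
    rw [Matrix.star_mulVec, Matrix.dotProduct_mulVec, Matrix.vecMul_vecMul]
    exact this
  have hli : LinearIndependent ℂ y := by
    rw [Fintype.linearIndependent_iff]
    intro g hg q
    have h2 : star (y q) ⬝ᵥ (∑ p, g p • y p) = 0 := by rw [hg, dotProduct_zero]
    rw [dotProduct_sum'] at h2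
    have h3 : ∀ p ∈ Finset.univ, p ≠ q → star (y q) ⬝ᵥ (g p • y p) = 0 := by
      intro p _ hpq
      rw [dotProduct_smul, horth p q hpq, smul_zero]
    rw [Finset.sum_eq_single q h3 (by simp)] at h2
    rw [dotProduct_smul, smul_eq_mul] at h2
    rcases mul_eq_zero.mp h2 with h | h
    · exact h
    · exact absurd (dotProduct_star_self_eq_zero.mp h) (hf q)
  have := hli.fintype_card_le_finrank
  simpa [Module.finrank_fin_fun] using this

open scoped MatrixOrder in
lemma blocks {n : ℕ} {ι : Type*} [Fintype ι] (P : ι → Matrix (Fin n) (Fin n) ℂ)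
    (hP : ∀ t, (P t).PosSemidef) (hsum : ∑ t, P t = 1) :
    ∃ (k r : ℕ) (A : Fin r → Matrix (Fin k) (Fin n) ℂ),
      IsKraus A ∧ confGraph A = Submodule.span ℂ (Set.range P) := by
  classical
  set r := Fintype.card ι with hr
  set e : Fin r ≃ ι := (Fintype.equivFin ι).symm with he
  set Q : ι → Matrix (Fin n) (Fin n) ℂ := fun t => CFC.sqrt (P t) with hQ
  have hQQ : ∀ t, (Q t)ᴴ * Q t = P t := by
    intro t
    show (CFC.sqrt (P t))ᴴ * CFC.sqrt (P t) = P t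
    rw [(CFC.sqrt_nonneg (P t)).posSemidef.isHermitian.eq]
    exact CFC.sqrt_mul_sqrt_self (P t) (hP t).nonneg
  set A : Fin r → Matrix (Fin (r * n)) (Fin n) ℂ := fun u => fun p c =>
    if (finProdFinEquiv.symm p).1 = u then Q (e u) ((finProdFinEquiv.symm p).2) c else 0 with hA
  have key : ∀ u v, (A u)ᴴ * A v = if u = v then P (e u) else 0 := by
    intro u v
    ext c c'
    rw [Matrix.mul_apply]
    have h1 : ∀ p : Fin (r * n), (A u)ᴴ c p * A v p c'
        = star (A u p c) * A v p c' := by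
      intro p; rw [Matrix.conjTranspose_apply]
    simp only [h1]
    rw [← Equiv.sum_comp finProdFinEquiv (fun p => star (A u p c) * A v p c')]
    rw [Fintype.sum_prod_type]
    simp only [hA, Equiv.symm_apply_apply]
    by_cases huv : u = v
    · subst huv
      rw [if_pos rfl]
      rw [← hQQ (e u), Matrix.mul_apply]
      rw [Finset.sum_eq_single u]
      · simp [Matrix.conjTranspose_apply]
      · intro w _ hw
        refine Finset.sum_eq_zero fun ρ _ => ?_
        rw [if_neg hw]
        simp
      · simp
    · rw [if_neg huv]
      refine Finset.sum_eq_zero fun w _ => Finset.sum_eq_zero fun ρ _ => ?_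
      by_cases hwv : w = v
      · have hwu : w ≠ u := fun h => huv (h ▸ hwv)
        rw [if_neg hwu]
        simp
      · rw [if_neg hwv]
        simp
  refine ⟨r * n, r, A, ?_, ?_⟩
  · show ∑ u, (A u)ᴴ * A u = 1
    rw [show (∑ u, (A u)ᴴ * A u) = ∑ u, P (e u) from
      Finset.sum_congr rfl fun u _ => by rw [key, if_pos rfl]]
    rw [Equiv.sum_comp e P]
    exact hsum
  · apply le_antisymm
    · rw [confGraph, Submodule.span_le]
      rintro B ⟨i, j, rfl⟩
      rw [key]
      by_cases hij : i = j
      · rw [if_pos hij]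
        exact Submodule.subset_span ⟨e i, rfl⟩
      · rw [if_neg hij]
        exact Submodule.zero_mem _
    · rw [Submodule.span_le]
      rintro B ⟨t, rfl⟩
      refine Submodule.subset_span ⟨e.symm t, e.symm t, ?_⟩
      rw [key, if_pos rfl, Equiv.apply_symm_apply]

lemma psd_smul {n : ℕ} {A : Matrix (Fin n) (Fin n) ℂ} (hA : A.PosSemidef) {c : ℝ}
    (hc : 0 ≤ c) : ((c : ℂ) • A).PosSemidef := by
  refine Matrix.PosSemidef.of_dotProduct_mulVec_nonneg ?_ ?_
  · unfold Matrix.IsHermitian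
    rw [conjTranspose_smul, hA.1.eq, Complex.star_def, Complex.conj_ofReal]
  · intro x
    rw [Matrix.smul_mulVec, dotProduct_smul, smul_eq_mul]
    exact mul_nonneg (Complex.zero_le_real.mpr hc) (hA.dotProduct_mulVec_nonneg x)

lemma realizable {n : ℕ} (S : Submodule ℂ (Matrix (Fin n) (Fin n) ℂ))
    (hS : IsOperatorSystem S) :
    ∃ (k r : ℕ) (A : Fin r → Matrix (Fin k) (Fin n) ℂ), IsKraus A ∧ confGraph A = S := by
  classical
  obtain ⟨d, Cf, hCf⟩ := Submodule.fg_iff_exists_fin_generating_family.mp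
    (IsNoetherian.noetherian S)
  have hCfS : ∀ j, Cf j ∈ S := fun j => hCf ▸ Submodule.subset_span (Set.mem_range_self j)
  set M : Fin d × Bool → Matrix (Fin n) (Fin n) ℂ := fun z =>
    if z.2 then Complex.I • (Cf z.1 - (Cf z.1)ᴴ) else Cf z.1 + (Cf z.1)ᴴ with hM
  have hMH : ∀ z, (M z).IsHermitian := by
    intro z
    simp only [hM]
    by_cases hb : z.2
    · rw [if_pos hb]
      unfold Matrix.IsHermitian
      rw [conjTranspose_smul, conjTranspose_sub, conjTranspose_conjTranspose]
      rw [show (star Complex.I) = -Complex.I from Complex.conj_I]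
      rw [neg_smul, ← smul_neg, neg_sub]
    · rw [if_neg hb]
      unfold Matrix.IsHermitian
      rw [conjTranspose_add, conjTranspose_conjTranspose, add_comm]
  have hMS : ∀ z, M z ∈ S := by
    intro z
    simp only [hM]
    by_cases hb : z.2
    · rw [if_pos hb]
      exact S.smul_mem _ (S.sub_mem (hCfS z.1) (hS.2 _ (hCfS z.1)))
    · rw [if_neg hb]
      exact S.add_mem (hCfS z.1) (hS.2 _ (hCfS z.1))
  choose t ht0 htp htm using fun z => psd_perturb (M z) (hMH z)
  set c : ℝ := (4 * d + 1)⁻¹ with hc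
  have hc0 : 0 < c := by positivity
  set P : Unit ⊕ ((Fin d × Bool) × Bool) → Matrix (Fin n) (Fin n) ℂ := fun z =>
    match z with
    | Sum.inl _ => (c : ℂ) • 1
    | Sum.inr (z, true) => (c : ℂ) • (1 + (t z : ℂ) • M z)
    | Sum.inr (z, false) => (c : ℂ) • (1 - (t z : ℂ) • M z) with hP
  have hPsd : ∀ z, (P z).PosSemidef := by
    rintro (u | ⟨z, b⟩)
    · exact psd_smul Matrix.PosSemidef.one hc0.le
    · cases b
      · exact psd_smul (htm z) hc0.le
      · exact psd_smul (htp z) hc0.le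
  have hsum : ∑ z, P z = 1 := by
    rw [Fintype.sum_sum_type]
    have h1 : ∑ u : Unit, P (Sum.inl u) = (c : ℂ) • 1 := by simp [hP]
    have h2 : ∀ z : Fin d × Bool, ∑ sgn : Bool, P (Sum.inr (z, sgn)) = ((2 * c : ℝ) : ℂ) • 1 := by
      intro z
      rw [Fintype.sum_bool]
      show (c : ℂ) • (1 + (t z : ℂ) • M z) + (c : ℂ) • (1 - (t z : ℂ) • M z)
          = ((2 * c : ℝ) : ℂ) • 1
      push_cast
      module
    rw [Fintype.sum_prod_type, h1]
    rw [show (∑ z : Fin d × Bool, ∑ sgn : Bool, P (Sum.inr (z, sgn)))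
        = ∑ _z : Fin d × Bool, ((2 * c : ℝ) : ℂ) • (1 : Matrix (Fin n) (Fin n) ℂ) from
      Finset.sum_congr rfl fun z _ => h2 z]
    rw [Finset.sum_const, Finset.card_univ, Fintype.card_prod, Fintype.card_fin,
      Fintype.card_bool, ← Nat.cast_smul_eq_nsmul ℂ]
    have : ((c : ℂ) + ((d * 2 : ℕ) : ℂ) * ((2 * c : ℝ) : ℂ)) = 1 := by
      have h4 : ((4 * (d : ℝ) + 1)) * c = 1 := by
        rw [hc]
        field_simp
      push_cast
      rw [show ((c : ℂ) + (d : ℂ) * 2 * (2 * (c : ℂ))) = (((4 * (d : ℝ) + 1) * c : ℝ) : ℂ) by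
        push_cast; ring]
      rw [h4]
      norm_num
    rw [smul_smul, ← add_smul, this, one_smul]
  obtain ⟨k, r, A, hK, hG⟩ := blocks P hPsd hsum
  refine ⟨k, r, A, hK, ?_⟩
  rw [hG]
  apply le_antisymm
  · rw [Submodule.span_le]
    rintro B ⟨z, rfl⟩
    rcases z with u | ⟨z, b⟩
    · exact S.smul_mem _ hS.1
    · cases b
      · exact S.smul_mem _ (S.sub_mem hS.1 (S.smul_mem _ (hMS z)))
      · exact S.smul_mem _ (S.add_mem hS.1 (S.smul_mem _ (hMS z)))
  · rw [← hCf, Submodule.span_le]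
    rintro B ⟨j, rfl⟩
    have h1 : (1 : Matrix (Fin n) (Fin n) ℂ) ∈ Submodule.span ℂ (Set.range P) := by
      have hmem : P (Sum.inl ()) ∈ Submodule.span ℂ (Set.range P) :=
        Submodule.subset_span ⟨Sum.inl (), rfl⟩
      have h2 := Submodule.smul_mem (Submodule.span ℂ (Set.range P)) ((c : ℂ))⁻¹ hmem
      rwa [show ((c : ℂ))⁻¹ • P (Sum.inl ()) = 1 by
        show ((c : ℂ))⁻¹ • ((c : ℂ) • (1 : Matrix (Fin n) (Fin n) ℂ)) = 1
        rw [smul_smul, inv_mul_cancel₀ (by exact_mod_cast hc0.ne'), one_smul]] at h2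
    have hMmem : ∀ z, M z ∈ Submodule.span ℂ (Set.range P) := by
      intro z
      have hp : P (Sum.inr (z, true)) ∈ Submodule.span ℂ (Set.range P) :=
        Submodule.subset_span ⟨Sum.inr (z, true), rfl⟩
      have hm : P (Sum.inr (z, false)) ∈ Submodule.span ℂ (Set.range P) :=
        Submodule.subset_span ⟨Sum.inr (z, false), rfl⟩
      have hdiff := Submodule.sub_mem _ hp hm
      have heq : P (Sum.inr (z, true)) - P (Sum.inr (z, false))
          = ((2 * t z * c : ℝ) : ℂ) • M z := by
        show (c : ℂ) • (1 + (t z : ℂ) • M z) - (c : ℂ) • (1 - (t z : ℂ) • M z) = _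
        push_cast
        module
      rw [heq] at hdiff
      have hne : ((2 * t z * c : ℝ) : ℂ) ≠ 0 := by
        have h5 := ht0 z
        have : (2 * t z * c : ℝ) ≠ 0 := by positivity
        exact_mod_cast this
      exact (Submodule.smul_mem_iff _ hne).mp hdiff
    have hCfspan : Cf j = (2 : ℂ)⁻¹ • (M (j, false) - Complex.I • M (j, true)) := by
      show Cf j = (2 : ℂ)⁻¹ • ((Cf j + (Cf j)ᴴ) - Complex.I • (Complex.I • (Cf j - (Cf j)ᴴ)))
      rw [smul_smul, Complex.I_mul_I]
      match_scalars <;> ring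
    rw [hCfspan]
    exact Submodule.smul_mem _ _ (Submodule.sub_mem _ (hMmem (j, false))
      (Submodule.smul_mem _ _ (hMmem (j, true))))

/-- `α(S) ≤ β(S) ≤ γ(S) ≤ cc(S)` for every operator system `S ⊆ M_n`
(the last inequality in `ℕ ∪ {∞}`). -/
theorem alpha_le_beta_le_gamma_le_cc (n : ℕ) (S : Submodule ℂ (Matrix (Fin n) (Fin n) ℂ))
    (hS : IsOperatorSystem S) :
    alphaOS S ≤ betaOS S ∧ betaOS S ≤ gammaOS S ∧ (gammaOS S : ℕ∞) ≤ ccOS S := by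
  obtain ⟨k0, r0, A0, hK0, hG0⟩ := realizable S hS
  have hGne : {k | ∃ r : ℕ, ∃ A : Fin r → Matrix (Fin k) (Fin n) ℂ,
      IsKraus A ∧ confGraph A = S}.Nonempty := ⟨k0, r0, A0, hK0, hG0⟩
  have hGmem := Nat.sInf_mem hGne
  obtain ⟨rg, Ag, hKg, hGg⟩ := hGmem
  have hbg : betaOS S ≤ gammaOS S :=
    Nat.sInf_le ⟨rg, Ag, hKg, le_of_eq hGg⟩
  have hBne : {k | ∃ r : ℕ, ∃ A : Fin r → Matrix (Fin k) (Fin n) ℂ,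
      IsKraus A ∧ confGraph A ≤ S}.Nonempty := ⟨gammaOS S, rg, Ag, hKg, le_of_eq hGg⟩
  have hBmem := Nat.sInf_mem hBne
  obtain ⟨rb, Ab, hKb, hGb⟩ := hBmem
  refine ⟨?_, hbg, ?_⟩
  · refine csSup_le' ?_
    rintro m hm
    simp only [Set.mem_setOf_eq] at hm
    obtain ⟨x, hx0, hortho⟩ := hm
    exact alpha_bound S Ab hKb hGb x hx0 hortho
  · refine le_sInf ?_
    rintro c ⟨k, rfl, r, A, hK, _, hG⟩
    have hmem : k ∈ {k | ∃ r : ℕ, ∃ A : Fin r → Matrix (Fin k) (Fin n) ℂ,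
        IsKraus A ∧ confGraph A = S} := ⟨r, A, hK, hG⟩
    exact_mod_cast Nat.sInf_le hmem
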